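/- Let μ₀ be any product probability measure on {0,1}^n (the coordinates are independent under μ₀), and let μ be obtained from μ₀ by applying any finite sequence of updates, each of which is either a gate update G_{α,β} (with α ≠ β) or a noise update N_i with some parameter p ∈ [0,1]. Then for every pair of disjoint subsets A, B of sites, μ(Q_{A∪B} = 0) ≥ μ(Q_A = 0) · μ(Q_B = 0). -/

import Mathlib

open Finset

variable {n : ℕ}

/-- Transition kernel of the gate update `G_{α,β}`: the pair `(x α, x β)` goes
`(0,0) → (0,0)` and `(1,1) → (1,1)` with probability `1`, while `(0,1)` or `(1,0)`
go to `(0,0)` with probability `1/5` and to `(1,1)` with probability `4/5`;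
all other coordinates are unchanged. -/
noncomputable def gateKernel (α β : Fin n) (x y : Fin n → Bool) : ℝ :=
  if ∀ i, i ≠ α → i ≠ β → y i = x i then
    (if x α = x β then (if y α = x α ∧ y β = x β then 1 else 0)
     else if y α = false ∧ y β = false then 1 / 5
     else if y α = true ∧ y β = true then 4 / 5
     else 0)
  else 0

/-- One gate update `G_{α,β}` applied to a distribution `μ` on `{0,1}^n`. -/
noncomputable def gateUpdate (α β : Fin n) (μ : (Fin n → Bool) → ℝ) : (Fin n → Bool) → ℝ :=
  fun y => ∑ x : Fin n → Bool, μ x * gateKernel α β x y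

/-- Transition kernel of the noise update `N_i` with parameter `p`: coordinate
`x i` goes `0 → 0` with probability `(1-p)²`, `0 → 1` with probability `2p - p²`,
`1 → 1` with probability `1`; all other coordinates are unchanged. -/
noncomputable def noiseKernel (i : Fin n) (p : ℝ) (x y : Fin n → Bool) : ℝ :=
  if ∀ k, k ≠ i → y k = x k then
    (if x i = true then (if y i = true then 1 else 0)
     else if y i = false then (1 - p) ^ 2 else 2 * p - p ^ 2)
  else 0

/-- One noise update `N_i` with parameter `p` applied to a distribution `μ`. -/
noncomputable def noiseUpdate (i : Fin n) (p : ℝ) (μ : (Fin n → Bool) → ℝ) : (Fin n → Bool) → ℝ :=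
  fun y => ∑ x : Fin n → Bool, μ x * noiseKernel i p x y

/-- `μ(Q_S = 0)`: the probability, under `μ`, that all qubits in `S` carry no error. -/
noncomputable def probZero (μ : (Fin n → Bool) → ℝ) (S : Finset (Fin n)) : ℝ :=
  ∑ x : Fin n → Bool, if ∀ i ∈ S, x i = false then μ x else 0


/-- A single step of the error-propagation Markov chain: either a two-qubit gate
update `G_{α,β}` or a single-qubit noise update `N_i` with parameter `p`. -/
inductive ChainStep (n : ℕ) where
  | gate (α β : Fin n) : ChainStep n
  | noise (i : Fin n) (p : ℝ) : ChainStep n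

/-- Apply a single step of the chain to a distribution on `{0,1}^n`. -/
noncomputable def applyStep (s : ChainStep n) (μ : (Fin n → Bool) → ℝ) :
    (Fin n → Bool) → ℝ :=
  match s with
  | .gate α β => gateUpdate α β μ
  | .noise i p => noiseUpdate i p μ

/-- A step is admissible if a gate acts on two *distinct* sites and a noise
update has parameter `p ∈ [0,1]`. -/
def ChainStep.Admissible : ChainStep n → Prop
  | .gate α β => α ≠ β
  | .noise _ p => 0 ≤ p ∧ p ≤ 1

namespace Lemma1Aux

open Function

variable {n : ℕ}

/-- Positive association (for antitone test functions). -/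
def PA (μ : (Fin n → Bool) → ℝ) : Prop :=
  ∀ f g : (Fin n → Bool) → ℝ, Antitone f → Antitone g →
    (∑ x, μ x * f x) * (∑ x, μ x * g x) ≤ ∑ x, μ x * (f x * g x)

/-- Invariant: nonnegative, mass one, positively associated. -/
def Good (μ : (Fin n → Bool) → ℝ) : Prop :=
  (∀ x, 0 ≤ μ x) ∧ (∑ x, μ x) = 1 ∧ PA μ

lemma sum_pair {a b : Fin n → Bool} (hab : a ≠ b) (g : (Fin n → Bool) → ℝ)
    (h0 : ∀ y, y ≠ a → y ≠ b → g y = 0) : ∑ y, g y = g a + g b := by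
  have key : ∀ y : Fin n → Bool,
      g y = (if y = a then g a else 0) + (if y = b then g b else 0) := by
    intro y
    by_cases h1 : y = a
    · subst h1; simp [hab]
    · by_cases h2 : y = b
      · subst h2; simp [h1]
      · simp [h1, h2, h0 y h1 h2]
  rw [Finset.sum_congr rfl (fun y _ => key y), Finset.sum_add_distrib]
  simp

lemma sum_single {a : Fin n → Bool} (g : (Fin n → Bool) → ℝ)
    (h0 : ∀ y, y ≠ a → g y = 0) : ∑ y, g y = g a :=
  Finset.sum_eq_single a (fun y _ h => h0 y h) (by simp)

lemma bool_le_true_elim {a b : Bool} (h : a ≤ b) (ha : a = true) : b = true :=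
  le_antisymm (Bool.le_true b) (ha ▸ h)

lemma bool_le_false_elim {a b : Bool} (h : a ≤ b) (hb : b = false) : a = false :=
  le_antisymm (hb ▸ h) (Bool.false_le a)

lemma update_le_update {x x' : Fin n → Bool} (h : x ≤ x') (i : Fin n) (c : Bool) :
    Function.update x i c ≤ Function.update x' i c := by
  intro k
  by_cases hk : k = i
  · subst hk; simp
  · simp only [Function.update_of_ne hk]; exact h k

lemma le_update_true (x : Fin n → Bool) (i : Fin n) : x ≤ Function.update x i true := by
  intro k
  by_cases hk : k = i
  · subst hk; simp [Bool.le_true]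
  · simp [Function.update_of_ne hk]

lemma update_false_le (x : Fin n → Bool) (i : Fin n) : Function.update x i false ≤ x := by
  intro k
  by_cases hk : k = i
  · subst hk; simp [Bool.false_le]
  · simp [Function.update_of_ne hk]

/-- The two-point Chebyshev/covariance inequality. -/
lemma cheb2 {a1 a2 fx fb gx gb : ℝ} (ha1 : 0 ≤ a1) (ha2 : 0 ≤ a2) (hsum : a1 + a2 = 1)
    (hf : fb ≤ fx) (hg : gb ≤ gx) :
    (a1 * fx + a2 * fb) * (a1 * gx + a2 * gb) ≤ a1 * (fx * gx) + a2 * (fb * gb) := by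
  have h2 : a2 = 1 - a1 := by linarith
  subst h2
  nlinarith [mul_nonneg (mul_nonneg ha1 ha2) (mul_nonneg (sub_nonneg.2 hf) (sub_nonneg.2 hg))]

lemma noise_row (i : Fin n) (p : ℝ) (x : Fin n → Bool) (f : (Fin n → Bool) → ℝ) :
    ∑ y, noiseKernel i p x y * f y =
      if x i = true then f x
      else (1 - p) ^ 2 * f x + (2 * p - p ^ 2) * f (Function.update x i true) := by
  by_cases hx : x i = true
  · rw [if_pos hx, sum_single (a := x)]
    · rw [noiseKernel, if_pos (fun k _ => rfl), if_pos hx, if_pos hx, one_mul]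
    · intro y hy
      by_cases hoff : ∀ k, k ≠ i → y k = x k
      · have hyi : y i ≠ true := by
          intro h
          apply hy
          funext k
          by_cases hk : k = i
          · subst hk; rw [h, hx]
          · exact hoff k hk
        rw [noiseKernel, if_pos hoff, if_pos hx, if_neg hyi, zero_mul]
      · rw [noiseKernel, if_neg hoff, zero_mul]
  · have hxf : x i = false := by simpa using hx
    have hne : x ≠ Function.update x i true := by
      intro h
      have h2 := congrFun h i
      rw [Function.update_self, hxf] at h2
      exact Bool.false_ne_true h2
    rw [if_neg hx, sum_pair hne]
    · have k1 : noiseKernel i p x x = (1 - p) ^ 2 := by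
        rw [noiseKernel, if_pos (fun k _ => rfl), if_neg hx, if_pos hxf]
      have k2 : noiseKernel i p x (Function.update x i true) = 2 * p - p ^ 2 := by
        rw [noiseKernel, if_pos (fun k hk => Function.update_of_ne hk _ _), if_neg hx,
          if_neg (by simp : ¬(Function.update x i true i = false))]
      rw [k1, k2]
    · intro y hya hyb
      by_cases hoff : ∀ k, k ≠ i → y k = x k
      · exfalso
        cases hyi : y i
        · apply hya
          funext k
          by_cases hk : k = i
          · subst hk; rw [hyi, hxf]
          · exact hoff k hk
        · apply hyb
          funext k
          by_cases hk : k = i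
          · subst hk; rw [hyi, Function.update_self]
          · rw [hoff k hk, Function.update_of_ne hk]
      · rw [noiseKernel, if_neg hoff, zero_mul]

lemma noise_row_one (i : Fin n) (p : ℝ) (x : Fin n → Bool) :
    ∑ y, noiseKernel i p x y = 1 := by
  have h := noise_row i p x (fun _ => 1)
  simp only [mul_one] at h
  rw [h]
  split_ifs <;> ring

lemma noiseKernel_nonneg {p : ℝ} (hp0 : 0 ≤ p) (hp1 : p ≤ 1) (i : Fin n)
    (x y : Fin n → Bool) : 0 ≤ noiseKernel i p x y := by
  rw [noiseKernel]
  split_ifs <;> nlinarith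

lemma noise_F_antitone (i : Fin n) {p : ℝ} (hp0 : 0 ≤ p) (hp1 : p ≤ 1)
    {f : (Fin n → Bool) → ℝ} (hf : Antitone f) :
    Antitone (fun x => ∑ y, noiseKernel i p x y * f y) := by
  intro x x' hxx'
  simp only [noise_row]
  have ha1 : (0:ℝ) ≤ (1 - p) ^ 2 := by positivity
  have ha2 : (0:ℝ) ≤ 2 * p - p ^ 2 := by nlinarith
  by_cases hx' : x' i = true
  · by_cases hx : x i = true
    · rw [if_pos hx, if_pos hx']
      exact hf hxx'
    · rw [if_neg hx, if_pos hx']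
      have h1 : f x' ≤ f (Function.update x i true) := by
        apply hf
        intro k
        by_cases hk : k = i
        · subst hk; rw [Function.update_self, hx']
        · rw [Function.update_of_ne hk]; exact hxx' k
      have h2 : f (Function.update x i true) ≤ f x := hf (le_update_true x i)
      nlinarith
  · have hx : ¬ (x i = true) := by
      intro h
      exact hx' (bool_le_true_elim (hxx' i) h)
    rw [if_neg hx, if_neg hx']
    have h1 : f x' ≤ f x := hf hxx'
    have h2 : f (Function.update x' i true) ≤ f (Function.update x i true) :=
      hf (update_le_update hxx' i true)
    nlinarith

lemma noise_row_cheb (i : Fin n) {p : ℝ} (hp0 : 0 ≤ p) (hp1 : p ≤ 1)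
    {f g : (Fin n → Bool) → ℝ} (hf : Antitone f) (hg : Antitone g) (x : Fin n → Bool) :
    (∑ y, noiseKernel i p x y * f y) * (∑ y, noiseKernel i p x y * g y) ≤
      ∑ y, noiseKernel i p x y * (f y * g y) := by
  simp only [noise_row]
  by_cases hx : x i = true
  · simp [hx]
  · simp only [if_neg hx]
    exact cheb2 (by positivity) (by nlinarith) (by ring)
      (hf (le_update_true x i)) (hg (le_update_true x i))

noncomputable section GateAux

variable {n : ℕ}

/-- Both gate qubits set to `false`. -/
def glow (α β : Fin n) (x : Fin n → Bool) : Fin n → Bool :=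
  Function.update (Function.update x α false) β false

/-- Both gate qubits set to `true`. -/
def ghigh (α β : Fin n) (x : Fin n → Bool) : Fin n → Bool :=
  Function.update (Function.update x α true) β true

lemma glow_apply_alpha {α β : Fin n} (h : α ≠ β) (x : Fin n → Bool) :
    glow α β x α = false := by
  rw [glow, Function.update_of_ne h, Function.update_self]

lemma glow_apply_beta (α β : Fin n) (x : Fin n → Bool) : glow α β x β = false :=
  Function.update_self _ _ _

lemma ghigh_apply_alpha {α β : Fin n} (h : α ≠ β) (x : Fin n → Bool) :
    ghigh α β x α = true := by
  rw [ghigh, Function.update_of_ne h, Function.update_self]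

lemma ghigh_apply_beta (α β : Fin n) (x : Fin n → Bool) : ghigh α β x β = true :=
  Function.update_self _ _ _

lemma glow_apply_other {α β k : Fin n} (hkα : k ≠ α) (hkβ : k ≠ β) (x : Fin n → Bool) :
    glow α β x k = x k := by
  rw [glow, Function.update_of_ne hkβ, Function.update_of_ne hkα]

lemma ghigh_apply_other {α β k : Fin n} (hkα : k ≠ α) (hkβ : k ≠ β) (x : Fin n → Bool) :
    ghigh α β x k = x k := by
  rw [ghigh, Function.update_of_ne hkβ, Function.update_of_ne hkα]

lemma glow_le_ghigh (α β : Fin n) (x : Fin n → Bool) : glow α β x ≤ ghigh α β x := by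
  intro k
  by_cases hβ : k = β
  · subst hβ; rw [glow_apply_beta, ghigh_apply_beta]; exact Bool.false_le _
  · by_cases hα : k = α
    · subst hα
      rw [glow, ghigh, Function.update_of_ne hβ, Function.update_of_ne hβ,
        Function.update_self, Function.update_self]
      exact Bool.false_le _
    · rw [glow_apply_other hα hβ, ghigh_apply_other hα hβ]

lemma glow_mono {x x' : Fin n → Bool} (h : x ≤ x') (α β : Fin n) :
    glow α β x ≤ glow α β x' :=
  update_le_update (update_le_update h α false) β false

lemma ghigh_mono {x x' : Fin n → Bool} (h : x ≤ x') (α β : Fin n) :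
    ghigh α β x ≤ ghigh α β x' :=
  update_le_update (update_le_update h α true) β true

lemma gate_row {α β : Fin n} (hαβ : α ≠ β) (x : Fin n → Bool) (f : (Fin n → Bool) → ℝ) :
    ∑ y, gateKernel α β x y * f y =
      if x α = x β then f x
      else 1 / 5 * f (glow α β x) + 4 / 5 * f (ghigh α β x) := by
  by_cases heq : x α = x β
  · rw [if_pos heq, sum_single (a := x)]
    · rw [gateKernel, if_pos (fun i _ _ => rfl), if_pos heq, if_pos ⟨rfl, rfl⟩, one_mul]
    · intro y hy
      by_cases hoff : ∀ i, i ≠ α → i ≠ β → y i = x i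
      · have hcon : ¬ (y α = x α ∧ y β = x β) := by
          rintro ⟨h1, h2⟩
          apply hy
          funext k
          by_cases hkα : k = α
          · subst hkα; exact h1
          · by_cases hkβ : k = β
            · subst hkβ; exact h2
            · exact hoff k hkα hkβ
        rw [gateKernel, if_pos hoff, if_pos heq, if_neg hcon, zero_mul]
      · rw [gateKernel, if_neg hoff, zero_mul]
  · have hne : glow α β x ≠ ghigh α β x := by
      intro h
      have h2 := congrFun h β
      rw [glow_apply_beta, ghigh_apply_beta] at h2
      exact Bool.false_ne_true h2
    rw [if_neg heq, sum_pair hne]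
    · have k1 : gateKernel α β x (glow α β x) = 1 / 5 := by
        rw [gateKernel, if_pos (fun i h1 h2 => glow_apply_other h1 h2 x), if_neg heq,
          if_pos ⟨glow_apply_alpha hαβ x, glow_apply_beta α β x⟩]
      have k2 : gateKernel α β x (ghigh α β x) = 4 / 5 := by
        rw [gateKernel, if_pos (fun i h1 h2 => ghigh_apply_other h1 h2 x), if_neg heq,
          if_neg (by rw [ghigh_apply_alpha hαβ]; simp),
          if_pos ⟨ghigh_apply_alpha hαβ x, ghigh_apply_beta α β x⟩]
      rw [k1, k2]
    · intro y hya hyb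
      by_cases hoff : ∀ i, i ≠ α → i ≠ β → y i = x i
      · rw [gateKernel, if_pos hoff, if_neg heq]
        have hla : ¬ (y α = false ∧ y β = false) := by
          rintro ⟨h1, h2⟩
          apply hya
          funext k
          by_cases hkα : k = α
          · subst hkα; rw [h1, glow_apply_alpha hαβ]
          · by_cases hkβ : k = β
            · subst hkβ; rw [h2, glow_apply_beta]
            · rw [hoff k hkα hkβ, glow_apply_other hkα hkβ]
        have hhb : ¬ (y α = true ∧ y β = true) := by
          rintro ⟨h1, h2⟩
          apply hyb
          funext k
          by_cases hkα : k = α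
          · subst hkα; rw [h1, ghigh_apply_alpha hαβ]
          · by_cases hkβ : k = β
            · subst hkβ; rw [h2, ghigh_apply_beta]
            · rw [hoff k hkα hkβ, ghigh_apply_other hkα hkβ]
        rw [if_neg hla, if_neg hhb, zero_mul]
      · rw [gateKernel, if_neg hoff, zero_mul]

lemma gate_row_one {α β : Fin n} (hαβ : α ≠ β) (x : Fin n → Bool) :
    ∑ y, gateKernel α β x y = 1 := by
  have h := gate_row hαβ x (fun _ => 1)
  simp only [mul_one] at h
  rw [h]
  split_ifs <;> norm_num

lemma gateKernel_nonneg (α β : Fin n) (x y : Fin n → Bool) : 0 ≤ gateKernel α β x y := by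
  rw [gateKernel]
  split_ifs <;> norm_num

lemma gate_F_antitone {α β : Fin n} (hαβ : α ≠ β)
    {f : (Fin n → Bool) → ℝ} (hf : Antitone f) :
    Antitone (fun x => ∑ y, gateKernel α β x y * f y) := by
  intro x x' hxx'
  simp only [gate_row hαβ]
  by_cases heq : x α = x β <;> by_cases heq' : x' α = x' β
  · rw [if_pos heq, if_pos heq']
    exact hf hxx'
  · -- x equal pair, x' unequal pair: then x α = x β = false
    rw [if_pos heq, if_neg heq']
    have hxa : x α = false := by
      cases hxa : x α
      · rfl
      · exfalso
        have h1 : x' α = true := bool_le_true_elim (hxx' α) hxa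
        have h2 : x' β = true := bool_le_true_elim (hxx' β) (heq ▸ hxa)
        exact heq' (h1.trans h2.symm)
    have hxb : x β = false := heq ▸ hxa
    have hle : x ≤ glow α β x' := by
      intro k
      by_cases hkα : k = α
      · subst hkα; rw [hxa]; exact Bool.false_le _
      · by_cases hkβ : k = β
        · subst hkβ; rw [hxb]; exact Bool.false_le _
        · rw [glow_apply_other hkα hkβ]; exact hxx' k
    have h1 : f (glow α β x') ≤ f x := hf hle
    have h2 : f (ghigh α β x') ≤ f (glow α β x') := hf (glow_le_ghigh α β x')
    linarith
  · -- x unequal, x' equal: then x' α = x' β = true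
    rw [if_neg heq, if_pos heq']
    have hx'a : x' α = true := by
      cases hxa : x α
      · have hxb : x β = true := by
          cases hxb : x β
          · exact absurd (hxa.trans hxb.symm) heq
          · rfl
        have := bool_le_true_elim (hxx' β) hxb
        rw [heq', this]
      · exact bool_le_true_elim (hxx' α) hxa
    have hx'b : x' β = true := heq' ▸ hx'a
    have hle : ghigh α β x ≤ x' := by
      intro k
      by_cases hkα : k = α
      · subst hkα; rw [ghigh_apply_alpha hαβ, hx'a]
      · by_cases hkβ : k = β
        · subst hkβ; rw [ghigh_apply_beta, hx'b]
        · rw [ghigh_apply_other hkα hkβ]; exact hxx' k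
    have h1 : f x' ≤ f (ghigh α β x) := hf hle
    have h2 : f (ghigh α β x) ≤ f (glow α β x) := hf (glow_le_ghigh α β x)
    linarith
  · rw [if_neg heq, if_neg heq']
    have h1 : f (glow α β x') ≤ f (glow α β x) := hf (glow_mono hxx' α β)
    have h2 : f (ghigh α β x') ≤ f (ghigh α β x) := hf (ghigh_mono hxx' α β)
    linarith

lemma gate_row_cheb {α β : Fin n} (hαβ : α ≠ β)
    {f g : (Fin n → Bool) → ℝ} (hf : Antitone f) (hg : Antitone g) (x : Fin n → Bool) :
    (∑ y, gateKernel α β x y * f y) * (∑ y, gateKernel α β x y * g y) ≤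
      ∑ y, gateKernel α β x y * (f y * g y) := by
  simp only [gate_row hαβ]
  by_cases heq : x α = x β
  · simp [heq]
  · simp only [if_neg heq]
    exact cheb2 (by norm_num) (by norm_num) (by norm_num)
      (hf (glow_le_ghigh α β x)) (hg (glow_le_ghigh α β x))

end GateAux
lemma update_exp (K : (Fin n → Bool) → (Fin n → Bool) → ℝ)
    (μ : (Fin n → Bool) → ℝ) (h : (Fin n → Bool) → ℝ) :
    ∑ y, (∑ x, μ x * K x y) * h y = ∑ x, μ x * ∑ y, K x y * h y := by
  calc ∑ y, (∑ x, μ x * K x y) * h y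
      = ∑ y, ∑ x, μ x * (K x y * h y) := by
        simp_rw [Finset.sum_mul, mul_assoc]
    _ = ∑ x, ∑ y, μ x * (K x y * h y) := Finset.sum_comm
    _ = ∑ x, μ x * ∑ y, K x y * h y := by simp_rw [← Finset.mul_sum]

lemma good_of_kernel (K : (Fin n → Bool) → (Fin n → Bool) → ℝ)
    (hK0 : ∀ x y, 0 ≤ K x y)
    (hrow1 : ∀ x, ∑ y, K x y = 1)
    (hrowF : ∀ f : (Fin n → Bool) → ℝ, Antitone f →
      Antitone (fun x => ∑ y, K x y * f y))
    (hcheb : ∀ f g : (Fin n → Bool) → ℝ, Antitone f → Antitone g → ∀ x,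
      (∑ y, K x y * f y) * (∑ y, K x y * g y) ≤ ∑ y, K x y * (f y * g y))
    {μ : (Fin n → Bool) → ℝ} (hμ : Good μ) :
    Good (fun y => ∑ x, μ x * K x y) := by
  obtain ⟨hpos, hmass, hpa⟩ := hμ
  refine ⟨?_, ?_, ?_⟩
  · intro y
    exact Finset.sum_nonneg fun x _ => mul_nonneg (hpos x) (hK0 x y)
  · have h := update_exp K μ (fun _ => 1)
    simp only [mul_one] at h
    rw [h]
    simp only [hrow1, mul_one, hmass]
  · intro f g hf hg
    rw [update_exp K μ f, update_exp K μ g, update_exp K μ (fun y => f y * g y)]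
    have h1 : ∑ x, μ x * ((∑ y, K x y * f y) * (∑ y, K x y * g y)) ≤
        ∑ x, μ x * ∑ y, K x y * (f y * g y) :=
      Finset.sum_le_sum fun x _ =>
        mul_le_mul_of_nonneg_left (hcheb f g hf hg x) (hpos x)
    have h2 := hpa _ _ (hrowF f hf) (hrowF g hg)
    calc (∑ x, μ x * ∑ y, K x y * f y) * (∑ x, μ x * ∑ y, K x y * g y)
        ≤ ∑ x, μ x * ((∑ y, K x y * f y) * (∑ y, K x y * g y)) := h2
      _ ≤ _ := h1

lemma good_noiseUpdate (i : Fin n) {p : ℝ} (hp0 : 0 ≤ p) (hp1 : p ≤ 1)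
    {μ : (Fin n → Bool) → ℝ} (hμ : Good μ) : Good (noiseUpdate i p μ) :=
  good_of_kernel (noiseKernel i p) (fun x y => noiseKernel_nonneg hp0 hp1 i x y)
    (noise_row_one i p) (fun f hf => noise_F_antitone i hp0 hp1 hf)
    (fun f g hf hg x => noise_row_cheb i hp0 hp1 hf hg x) hμ

lemma good_gateUpdate {α β : Fin n} (hαβ : α ≠ β)
    {μ : (Fin n → Bool) → ℝ} (hμ : Good μ) : Good (gateUpdate α β μ) :=
  good_of_kernel (gateKernel α β) (gateKernel_nonneg α β)
    (gate_row_one hαβ) (fun f hf => gate_F_antitone hαβ hf)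
    (fun f g hf hg x => gate_row_cheb hαβ hf hg x) hμ

/-- Pointwise formula for the noise update. -/
lemma noiseUpdate_apply (i : Fin n) (p : ℝ) (μ : (Fin n → Bool) → ℝ) (y : Fin n → Bool) :
    noiseUpdate i p μ y =
      if y i = true then μ y + (2 * p - p ^ 2) * μ (Function.update y i false)
      else (1 - p) ^ 2 * μ y := by
  rw [noiseUpdate]
  by_cases hy : y i = true
  · rw [if_pos hy]
    have hne : y ≠ Function.update y i false := by
      intro h
      have h2 := congrFun h i
      rw [Function.update_self, hy] at h2
      exact Bool.noConfusion h2
    rw [sum_pair hne]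
    · have k1 : noiseKernel i p y y = 1 := by
        rw [noiseKernel, if_pos (fun k _ => rfl), if_pos hy, if_pos hy]
      have k2 : noiseKernel i p (Function.update y i false) y = 2 * p - p ^ 2 := by
        rw [noiseKernel, if_pos (fun k hk => (Function.update_of_ne hk _ _).symm),
          if_neg (by simp : ¬(Function.update y i false i = true)),
          if_neg (by rw [hy]; simp : ¬(y i = false))]
      rw [k1, k2, mul_one, mul_comm]
    · intro x hxa hxb
      by_cases hoff : ∀ k, k ≠ i → y k = x k
      · exfalso
        cases hxi : x i
        · apply hxb
          funext k
          by_cases hk : k = i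
          · subst hk; rw [hxi, Function.update_self]
          · rw [← hoff k hk, Function.update_of_ne hk]
        · apply hxa
          funext k
          by_cases hk : k = i
          · subst hk; rw [hxi, hy]
          · exact (hoff k hk).symm
      · rw [noiseKernel, if_neg hoff, mul_zero]
  · have hyf : y i = false := by simpa using hy
    rw [if_neg hy, sum_single (a := y)]
    · rw [noiseKernel, if_pos (fun k _ => rfl), if_neg hy, if_pos hyf, mul_comm]
    · intro x hx
      by_cases hoff : ∀ k, k ≠ i → y k = x k
      · cases hxi : x i
        · exfalso
          apply hx
          funext k
          by_cases hk : k = i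
          · subst hk; rw [hxi, hyf]
          · exact (hoff k hk).symm
        · rw [noiseKernel, if_pos hoff, if_pos hxi, if_neg hy, mul_zero]
      · rw [noiseKernel, if_neg hoff, mul_zero]

/-- Partial product measure: coordinates in `s` are Bernoulli(`q i`), the rest
are deterministically `false`. -/
def prodM (q : Fin n → ℝ) (s : Finset (Fin n)) : (Fin n → Bool) → ℝ :=
  fun x => ∏ i, (if i ∈ s then (if x i then q i else 1 - q i) else (if x i then 0 else 1))

lemma prodM_empty (q : Fin n → ℝ) :
    prodM q ∅ = fun x => if x = (fun _ => false) then 1 else 0 := by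
  funext x
  by_cases h : x = (fun _ => false)
  · subst h; simp [prodM]
  · rw [if_neg h]
    have : ∃ i, x i = true := by
      by_contra hc
      push_neg at hc
      exact h (funext fun i => by simpa using hc i)
    obtain ⟨i, hi⟩ := this
    exact Finset.prod_eq_zero (Finset.mem_univ i) (by simp [hi])

lemma good_prodM_empty (q : Fin n → ℝ) : Good (prodM q ∅) := by
  rw [prodM_empty]
  have hsum : ∀ f : (Fin n → Bool) → ℝ,
      (∑ x, (if x = (fun _ => false) then (1:ℝ) else 0) * f x) = f (fun _ => false) := by
    intro f
    rw [sum_single (a := fun _ => false)]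
    · simp
    · intro y hy; rw [if_neg hy, zero_mul]
  refine ⟨fun x => by dsimp only; split_ifs <;> norm_num, ?_, ?_⟩
  · have := hsum (fun _ => 1)
    simpa using this
  · intro f g hf hg
    rw [hsum f, hsum g, hsum (fun x => f x * g x)]

lemma prodM_insert (q : Fin n → ℝ) {j : Fin n} {s : Finset (Fin n)} (hjs : j ∉ s)
    (hq0 : 0 ≤ q j) (hq1 : q j ≤ 1) :
    prodM q (insert j s) = noiseUpdate j (1 - Real.sqrt (1 - q j)) (prodM q s) := by
  set p := 1 - Real.sqrt (1 - q j) with hp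
  have hs : Real.sqrt (1 - q j) ^ 2 = 1 - q j := Real.sq_sqrt (by linarith)
  have h1 : (1 - p) ^ 2 = 1 - q j := by rw [hp]; ring_nf; linarith [hs]
  have h2 : 2 * p - p ^ 2 = q j := by
    have : 2 * p - p ^ 2 = 1 - (1 - p) ^ 2 := by ring
    rw [this, h1]; ring
  funext y
  rw [noiseUpdate_apply, h2]
  have herase : ∀ z : Fin n → Bool, (∀ k, k ≠ j → z k = y k) →
      (∏ i ∈ Finset.univ.erase j,
        (if i ∈ insert j s then (if y i then q i else 1 - q i) else (if y i then 0 else 1)))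
      = ∏ i ∈ Finset.univ.erase j,
        (if i ∈ s then (if z i then q i else 1 - q i) else (if z i then 0 else 1)) := by
    intro z hz
    refine Finset.prod_congr rfl fun i hi => ?_
    have hij : i ≠ j := Finset.ne_of_mem_erase hi
    have hzi : z i = y i := hz i hij
    simp [Finset.mem_insert, hij, hzi]
  by_cases hy : y j = true
  · rw [if_pos hy]
    have hz : prodM q s y = 0 := by
      refine Finset.prod_eq_zero (Finset.mem_univ j) ?_
      simp [hjs, hy]
    rw [hz, zero_add]
    rw [prodM, prodM, ← Finset.mul_prod_erase _ _ (Finset.mem_univ j),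
      ← Finset.mul_prod_erase _ _ (Finset.mem_univ j)]
    rw [herase (Function.update y j false) (fun k hk => Function.update_of_ne hk _ _)]
    simp [hjs, hy]
  · have hyf : y j = false := by simpa using hy
    rw [if_neg hy, h1]
    rw [prodM, prodM, ← Finset.mul_prod_erase _ _ (Finset.mem_univ j),
      ← Finset.mul_prod_erase _ _ (Finset.mem_univ j)]
    rw [herase y (fun _ _ => rfl)]
    simp [hjs, hyf]

lemma good_prodM (q : Fin n → ℝ) (hq : ∀ i, 0 ≤ q i ∧ q i ≤ 1) (s : Finset (Fin n)) :
    Good (prodM q s) := by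
  induction s using Finset.induction_on with
  | empty => exact good_prodM_empty q
  | @insert j s hjs ih =>
    rw [prodM_insert q hjs (hq j).1 (hq j).2]
    have hsq0 : 0 ≤ Real.sqrt (1 - q j) := Real.sqrt_nonneg _
    have hsq1 : Real.sqrt (1 - q j) ≤ 1 := by
      have h := Real.sqrt_le_sqrt (show 1 - q j ≤ 1 by linarith [(hq j).1])
      rwa [Real.sqrt_one] at h
    exact good_noiseUpdate j (by linarith) (by linarith) ih
lemma good_applyStep (s : ChainStep n) (hadm : s.Admissible)
    {μ : (Fin n → Bool) → ℝ} (hμ : Good μ) : Good (applyStep s μ) := by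
  cases s with
  | gate α β => exact good_gateUpdate hadm hμ
  | noise i p => exact good_noiseUpdate i hadm.1 hadm.2 hμ

lemma good_foldl (steps : List (ChainStep n)) (hsteps : ∀ s ∈ steps, s.Admissible)
    {μ : (Fin n → Bool) → ℝ} (hμ : Good μ) :
    Good (steps.foldl (fun m s => applyStep s m) μ) := by
  induction steps generalizing μ with
  | nil => exact hμ
  | cons s l ih =>
    rw [List.foldl_cons]
    exact ih (fun t ht => hsteps t (List.mem_cons_of_mem s ht))
      (good_applyStep s (hsteps s List.mem_cons_self) hμ)

/-- Indicator of the event `Q_A = 0`. -/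
def indA (A : Finset (Fin n)) : (Fin n → Bool) → ℝ :=
  fun x => if ∀ i ∈ A, x i = false then 1 else 0

lemma indA_antitone (A : Finset (Fin n)) : Antitone (indA A) := by
  intro x y hxy
  unfold indA
  by_cases hy : ∀ i ∈ A, y i = false
  · have hx : ∀ i ∈ A, x i = false := fun i hi => bool_le_false_elim (hxy i) (hy i hi)
    rw [if_pos hx, if_pos hy]
  · rw [if_neg hy]
    split_ifs <;> norm_num

lemma probZero_eq (μ : (Fin n → Bool) → ℝ) (S : Finset (Fin n)) :
    probZero μ S = ∑ x, μ x * indA S x := by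
  rw [probZero]
  refine Finset.sum_congr rfl fun x _ => ?_
  unfold indA
  split_ifs <;> simp

lemma indA_mul (A B : Finset (Fin n)) (x : Fin n → Bool) :
    indA A x * indA B x = indA (A ∪ B) x := by
  have hiff : (∀ i ∈ A ∪ B, x i = false) ↔
      ((∀ i ∈ A, x i = false) ∧ (∀ i ∈ B, x i = false)) := by
    simp [Finset.mem_union, or_imp, forall_and]
  unfold indA
  simp only [hiff]
  split_ifs <;> simp_all

end Lemma1Aux
/-- **Lemma 1 of the paper.** Starting from any product probability measure `μ₀`
on `{0,1}^n` (each coordinate `i` is independently `1` with probability `q i`),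
and applying any finite sequence of admissible gate/noise updates, the resulting
distribution `μ` satisfies `μ(Q_{A∪B} = 0) ≥ μ(Q_A = 0) · μ(Q_B = 0)` for all
disjoint subsets of sites `A, B`. -/
theorem probZero_union_ge_mul_of_product_init
    (q : Fin n → ℝ) (hq : ∀ i, 0 ≤ q i ∧ q i ≤ 1)
    (steps : List (ChainStep n)) (hsteps : ∀ s ∈ steps, s.Admissible)
    (A B : Finset (Fin n)) (hAB : Disjoint A B) :
    probZero
        (steps.foldl (fun m s => applyStep s m)
          (fun x => ∏ i : Fin n, if x i then q i else 1 - q i))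
        (A ∪ B)
      ≥ probZero
          (steps.foldl (fun m s => applyStep s m)
            (fun x => ∏ i : Fin n, if x i then q i else 1 - q i)) A
        * probZero
            (steps.foldl (fun m s => applyStep s m)
              (fun x => ∏ i : Fin n, if x i then q i else 1 - q i)) B := by
  classical
  have hinit : Lemma1Aux.Good (fun x => ∏ i : Fin n, if x i then q i else 1 - q i) := by
    have h := Lemma1Aux.good_prodM q hq Finset.univ
    have heq : Lemma1Aux.prodM q Finset.univ =
        fun x => ∏ i : Fin n, if x i then q i else 1 - q i := by
      funext x
      simp [Lemma1Aux.prodM]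
    rwa [heq] at h
  have hG := Lemma1Aux.good_foldl steps hsteps hinit
  have hpa := hG.2.2 (Lemma1Aux.indA A) (Lemma1Aux.indA B)
    (Lemma1Aux.indA_antitone A) (Lemma1Aux.indA_antitone B)
  rw [ge_iff_le, Lemma1Aux.probZero_eq, Lemma1Aux.probZero_eq, Lemma1Aux.probZero_eq]
  refine le_trans hpa (le_of_eq ?_)
  exact Finset.sum_congr rfl fun x _ => by rw [Lemma1Aux.indA_mul]
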